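/- For every λ ∈ [0,1], the infimum of the operator norm (largest eigenvalue) of the 2×2 positive semidefinite matrix Tr_B Y, taken over all 4×4 Hermitian matrices Y such that Y is positive semidefinite, the partial transpose Y^PT is positive semidefinite, and Y − π_λ is positive semidefinite, equals 1 − λ/2. -/

import Mathlib

open scoped Kronecker ComplexOrder
open Matrix

noncomputable section

/-- Partial trace over the second tensor factor. -/
def ptraceB {m k : Type*} [Fintype k] (M : Matrix (m × k) (m × k) ℂ) : Matrix m m ℂ :=
  Matrix.of fun i j => ∑ b, M (i, b) (j, b)

/-- Partial transpose on the second tensor factor. -/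
def ptransposeB {m k : Type*} (M : Matrix (m × k) (m × k) ℂ) : Matrix (m × k) (m × k) ℂ :=
  Matrix.of fun p q => M (p.1, q.2) (q.1, p.2)

/-- Encoding of a two-qubit index as an index in `Fin 4` (basis order |00⟩,|01⟩,|10⟩,|11⟩). -/
def idx4 (p : Fin 2 × Fin 2) : Fin 4 :=
  ⟨2 * p.1.val + p.2.val, by have h1 := p.1.isLt; have h2 := p.2.isLt; omega⟩

/-- Choi state of the qubit amplitude damping channel with parameter `l`. -/
def adChoi (l : ℝ) : Matrix (Fin 2 × Fin 2) (Fin 2 × Fin 2) ℂ :=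
  Matrix.of fun p q =>
    (!![(1:ℂ)/2, 0, 0, ((Real.sqrt (1 - l) : ℝ) : ℂ)/2;
        0, 0, 0, 0;
        0, 0, ((l : ℝ) : ℂ)/2, 0;
        ((Real.sqrt (1 - l) : ℝ) : ℂ)/2, 0, 0, ((1 - l : ℝ) : ℂ)/2]) (idx4 p) (idx4 q)

/-- Largest eigenvalue (operator norm) of a Hermitian matrix, as the supremum of the
Rayleigh quotient over unit vectors. -/
def maxEig {n : Type*} [Fintype n] (M : Matrix n n ℂ) : ℝ :=
  sSup {r : ℝ | ∃ v : n → ℂ, (∑ i, Complex.normSq (v i)) = 1 ∧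
    r = (dotProduct (star v) (M.mulVec v)).re}

/-- rank one matrix -/
def r1 (c : ℝ) (v : Fin 2 × Fin 2 → ℂ) : Matrix (Fin 2 × Fin 2) (Fin 2 × Fin 2) ℂ :=
  Matrix.of fun p q => (c:ℂ) * v p * star (v q)

/-- a vector on two qubits from a 2×2 matrix literal -/
def fv (M : Matrix (Fin 2) (Fin 2) ℂ) : Fin 2 × Fin 2 → ℂ := fun p => M p.1 p.2

lemma r1_psd (c : ℝ) (hc : 0 ≤ c) (v : Fin 2 × Fin 2 → ℂ) : (r1 c v).PosSemidef := by
  refine posSemidef_iff_dotProduct_mulVec.mpr ⟨?_, ?_⟩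
  · ext p q
    simp [r1, Matrix.conjTranspose_apply, Complex.ext_iff]
    constructor <;> ring
  · intro x
    have h : star x ⬝ᵥ (r1 c v).mulVec x
        = (c:ℂ) * ((star x ⬝ᵥ v) * star (star x ⬝ᵥ v)) := by
      simp [r1, dotProduct, Matrix.mulVec, Finset.mul_sum, Finset.sum_mul, star_sum]
      rw [Finset.sum_comm]
      congr 1; ext p; congr 1; ext q; ring
    rw [h, Complex.star_def, Complex.mul_conj, ← Complex.ofReal_mul, Complex.zero_le_real]
    exact mul_nonneg hc (Complex.normSq_nonneg _)

lemma bddAbove_ray (M : Matrix (Fin 2) (Fin 2) ℂ) :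
    BddAbove {r : ℝ | ∃ v : Fin 2 → ℂ, (∑ i, Complex.normSq (v i)) = 1 ∧
      r = (dotProduct (star v) (M.mulVec v)).re} := by
  refine ⟨∑ i, ∑ j, ‖M i j‖, ?_⟩
  rintro r ⟨v, hv, rfl⟩
  have hb : ∀ i, ‖v i‖ ≤ 1 := by
    intro i
    have h1 : Complex.normSq (v i) ≤ 1 := by
      rw [← hv]
      exact Finset.single_le_sum (fun j _ => Complex.normSq_nonneg (v j)) (Finset.mem_univ i)
    nlinarith [Complex.sq_norm (v i), norm_nonneg (v i)]
  calc (star v ⬝ᵥ M.mulVec v).re = ∑ i, ∑ j, ((star v i) * (M i j * v j)).re := by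
        simp [dotProduct, Matrix.mulVec, Finset.mul_sum, Complex.re_sum,
          Fin.sum_univ_two]
        ring
    _ ≤ ∑ i, ∑ j, ‖M i j‖ := by
        refine Finset.sum_le_sum fun i _ => Finset.sum_le_sum fun j _ => ?_
        calc ((star v i) * (M i j * v j)).re
            ≤ ‖(star v i) * (M i j * v j)‖ := Complex.re_le_norm _
          _ = ‖v i‖ * (‖M i j‖ * ‖v j‖) := by
              simp [norm_mul, Pi.star_apply, Complex.norm_conj]
          _ ≤ 1 * (‖M i j‖ * 1) := by
              refine mul_le_mul (hb i) (mul_le_mul_of_nonneg_left (hb j)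
                (norm_nonneg _)) ?_ zero_le_one
              positivity
          _ = ‖M i j‖ := by ring

lemma maxEig_const (c : ℝ) : maxEig ((c : ℂ) • (1 : Matrix (Fin 2) (Fin 2) ℂ)) = c := by
  have key : ∀ v : Fin 2 → ℂ, (∑ i, Complex.normSq (v i)) = 1 →
      (star v ⬝ᵥ (((c:ℂ) • (1 : Matrix (Fin 2) (Fin 2) ℂ)).mulVec v)).re = c := by
    intro v hv
    simp only [Fin.sum_univ_two, Complex.normSq_apply] at hv
    simp [dotProduct, Matrix.mulVec, Matrix.smul_apply, Matrix.one_apply,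
      Fin.sum_univ_two, Complex.mul_re, Complex.ext_iff]
    linear_combination c * hv
  unfold maxEig
  apply le_antisymm
  · refine csSup_le ⟨c, ⟨![1,0], by simp [Fin.sum_univ_two], ?_⟩⟩ ?_
    · exact (key ![1,0] (by simp [Fin.sum_univ_two])).symm
    · rintro r ⟨v, hv, rfl⟩; exact le_of_eq (key v hv)
  · refine le_csSup ⟨c, ?_⟩ ⟨![1,0], by simp [Fin.sum_univ_two], ?_⟩
    · rintro r ⟨v, hv, rfl⟩; exact le_of_eq (key v hv)
    · exact (key ![1,0] (by simp [Fin.sum_univ_two])).symm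

set_option maxHeartbeats 2000000 in
/-- The SDP value: the infimum of the operator norm of `Tr_B Y` over all
PSD, PPT matrices `Y` with `Y ⪰ π_λ` equals `1 − λ/2`. -/
theorem stmt9 (l : ℝ) (hl : l ∈ Set.Icc (0:ℝ) 1) :
    sInf {r : ℝ | ∃ Y : Matrix (Fin 2 × Fin 2) (Fin 2 × Fin 2) ℂ,
        Y.IsHermitian ∧ Y.PosSemidef ∧ (ptransposeB Y).PosSemidef ∧
        (Y - adChoi l).PosSemidef ∧ r = maxEig (ptraceB Y)}
      = 1 - l / 2 := by
  obtain ⟨hl0, hl1⟩ := hl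
  have htC : ((Real.sqrt (1 - l) : ℝ) : ℂ)^2 = 1 - (l:ℂ) := by
    rw [← Complex.ofReal_pow, Real.sq_sqrt (by linarith : (0:ℝ) ≤ 1 - l)]; push_cast; ring
  set t : ℝ := Real.sqrt (1 - l) with htdef
  have ha : (0:ℝ) ≤ (1 - l)/2 := by linarith
  set Ystar : Matrix (Fin 2 × Fin 2) (Fin 2 × Fin 2) ℂ :=
    adChoi l + r1 ((1 - l)/2) (fv !![0,1;1,0]) with hYdef
  have hπdec : adChoi l = r1 (1/2) (fv !![1,0;0,(t:ℂ)]) + r1 (l/2) (fv !![0,0;1,0]) := by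
    ext ⟨i, k⟩ ⟨j, m⟩
    fin_cases i <;> fin_cases k <;> fin_cases j <;> fin_cases m <;>
      simp [adChoi, idx4, r1, fv, Matrix.vecHead, Matrix.vecTail, ← htdef] <;>
      push_cast <;> ring_nf <;> linear_combination (norm := ring_nf) -htC/2
  have hπpsd : (adChoi l).PosSemidef := by
    rw [hπdec]
    exact (r1_psd _ (by norm_num) _).add (r1_psd _ (by linarith) _)
  have hsub : Ystar - adChoi l = r1 ((1 - l)/2) (fv !![0,1;1,0]) := by
    rw [hYdef]; exact add_sub_cancel_left _ _
  have hsubpsd : (Ystar - adChoi l).PosSemidef := by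
    rw [hsub]; exact r1_psd _ ha _
  have hYpsd : Ystar.PosSemidef := hπpsd.add (r1_psd _ ha _)
  have hPTdec : ptransposeB Ystar = r1 (1/2) (fv !![0,(t:ℂ);1,0]) + r1 ((1 - l)/2) (fv !![1,0;0,1])
      + r1 (l/2) (fv !![1,0;0,0]) := by
    ext ⟨i, k⟩ ⟨j, m⟩
    fin_cases i <;> fin_cases k <;> fin_cases j <;> fin_cases m <;>
      simp [ptransposeB, hYdef, adChoi, idx4, r1, fv, Matrix.vecHead, Matrix.vecTail,
        Matrix.add_apply, ← htdef] <;>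
      push_cast <;> ring_nf <;> linear_combination (norm := ring_nf) -htC/2
  have hPTpsd : (ptransposeB Ystar).PosSemidef := by
    rw [hPTdec]
    exact ((r1_psd _ (by norm_num) _).add (r1_psd _ ha _)).add (r1_psd _ (by linarith) _)
  have htr : ptraceB Ystar = (((1 - l/2 : ℝ)) : ℂ) • (1 : Matrix (Fin 2) (Fin 2) ℂ) := by
    ext i j
    fin_cases i <;> fin_cases j <;>
      simp [ptraceB, hYdef, adChoi, idx4, r1, fv, Fin.sum_univ_two, Matrix.add_apply,
        Matrix.one_apply, Matrix.vecHead, Matrix.vecTail] <;>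
      push_cast <;> ring
  have hmem : (1 - l/2) ∈ {r : ℝ | ∃ Y : Matrix (Fin 2 × Fin 2) (Fin 2 × Fin 2) ℂ,
        Y.IsHermitian ∧ Y.PosSemidef ∧ (ptransposeB Y).PosSemidef ∧
        (Y - adChoi l).PosSemidef ∧ r = maxEig (ptraceB Y)} :=
    ⟨Ystar, hYpsd.1, hYpsd, hPTpsd, hsubpsd, by rw [htr, maxEig_const]⟩
  have hlb : ∀ r ∈ {r : ℝ | ∃ Y : Matrix (Fin 2 × Fin 2) (Fin 2 × Fin 2) ℂ,
        Y.IsHermitian ∧ Y.PosSemidef ∧ (ptransposeB Y).PosSemidef ∧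
        (Y - adChoi l).PosSemidef ∧ r = maxEig (ptraceB Y)}, 1 - l/2 ≤ r := by
    rintro r ⟨Y, hH, hY, hPT, hYπ, rfl⟩
    set zv : Fin 2 × Fin 2 → ℂ := fv !![1,0;0,(t:ℂ)] with hzv
    set wv : Fin 2 × Fin 2 → ℂ := fv !![0,1;-(t:ℂ),0] with hwv
    have h1 : 0 ≤ (star zv ⬝ᵥ (Y - adChoi l).mulVec zv).re := by
      have := hYπ.dotProduct_mulVec_nonneg zv
      rw [Complex.le_def] at this
      simpa using this.1
    have h2 : 0 ≤ (star wv ⬝ᵥ (ptransposeB Y).mulVec wv).re := by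
      have := hPT.dotProduct_mulVec_nonneg wv
      rw [Complex.le_def] at this
      simpa using this.1
    have hid : (star (![1,0] : Fin 2 → ℂ) ⬝ᵥ (ptraceB Y).mulVec ![1,0])
          + ((1 - l : ℝ) : ℂ) * (star (![0,1] : Fin 2 → ℂ) ⬝ᵥ (ptraceB Y).mulVec ![0,1])
        = (star zv ⬝ᵥ (Y - adChoi l).mulVec zv) + (star wv ⬝ᵥ (ptransposeB Y).mulVec wv)
          + (((2 - l)^2/2 : ℝ) : ℂ) := by
      simp [ptraceB, ptransposeB, adChoi, idx4, hzv, hwv, fv, dotProduct,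
        Matrix.mulVec, Fintype.sum_prod_type, Fin.sum_univ_two, Matrix.sub_apply,
        Matrix.vecHead, Matrix.vecTail, Complex.star_def, Complex.conj_ofReal, ← htdef]
      push_cast
      linear_combination (norm := ring_nf) ((3 - (l:ℂ))/2) * htC - (Y (1,0) (1,0) + Y (1,1) (1,1)) * htC
    have hre := congrArg Complex.re hid
    simp only [Complex.add_re, Complex.re_ofReal_mul, Complex.ofReal_re] at hre
    have hR0 : (star (![1,0] : Fin 2 → ℂ) ⬝ᵥ (ptraceB Y).mulVec ![1,0]).re
        ≤ maxEig (ptraceB Y) :=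
      le_csSup (bddAbove_ray _) ⟨![1,0], by simp [Fin.sum_univ_two], rfl⟩
    have hR1 : (star (![0,1] : Fin 2 → ℂ) ⬝ᵥ (ptraceB Y).mulVec ![0,1]).re
        ≤ maxEig (ptraceB Y) :=
      le_csSup (bddAbove_ray _) ⟨![0,1], by simp [Fin.sum_univ_two], rfl⟩
    have hmul := mul_le_mul_of_nonneg_left hR1 (by linarith : (0:ℝ) ≤ 1 - l)
    nlinarith [hre, h1, h2, hR0, hmul]
  apply le_antisymm
  · exact csInf_le ⟨1 - l/2, fun r hr => hlb r hr⟩ hmem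
  · exact le_csInf ⟨_, hmem⟩ hlb
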